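/- (Flatness of linear time-variant discrete-time single-input systems under the rank condition.) Let n ≥ 1 and suppose M_k is invertible for every k ∈ ℤ. Set c_k^T := e_n^T M_k^{-1}. Then the map which sends a solution (x, u) of the system to its output sequence (c_k^T x_k)_{k ∈ ℤ} is a bijection from the set of all solutions onto the set of all real sequences ℤ → ℝ; i.e., y_k = c_k^T x_k is a flat output establishing a one-to-one correspondence between system trajectories and arbitrary sequences. -/

import Mathlib

open Matrix BigOperators

noncomputable section

/-- `Pmat n A k j = A (k-1) * A (k-2) * ⋯ * A (k-j)` (product of `j` factors, `Pmat n A k 0 = 1`). -/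
def Pmat (n : ℕ) (A : ℤ → Matrix (Fin n) (Fin n) ℝ) (k : ℤ) : ℕ → Matrix (Fin n) (Fin n) ℝ
  | 0 => 1
  | j + 1 => Pmat n A k j * A (k - ((j : ℤ) + 1))

/-- The matrix `M_k` whose `j`-th column is `P_k^{(j)} b_{k-1-j}`. -/
def Mmat (n : ℕ) (A : ℤ → Matrix (Fin n) (Fin n) ℝ) (b : ℤ → Fin n → ℝ) (k : ℤ) :
    Matrix (Fin n) (Fin n) ℝ :=
  Matrix.of fun i j => (Pmat n A k (j : ℕ) *ᵥ b (k - 1 - ((j : ℕ) : ℤ))) i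

/-- The last standard basis vector `e_n` of `ℝ^n`. -/
def elast (n : ℕ) : Fin n → ℝ := fun i => if (i : ℕ) = n - 1 then 1 else 0

/-- The row vector `c_k^T := e_n^T M_k^{-1}`. -/
def cvec (n : ℕ) (A : ℤ → Matrix (Fin n) (Fin n) ℝ) (b : ℤ → Fin n → ℝ) (k : ℤ) :
    Fin n → ℝ :=
  elast n ᵥ* (Mmat n A b k)⁻¹

/-- The matrix `Θ_k` whose `i`-th row is `c_{k+i}^T A_{k+i-1} ⋯ A_k`. -/
def Theta (n : ℕ) (A : ℤ → Matrix (Fin n) (Fin n) ℝ) (b : ℤ → Fin n → ℝ) (k : ℤ) :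
    Matrix (Fin n) (Fin n) ℝ :=
  Matrix.of fun i j => (cvec n A b (k + (i : ℕ)) ᵥ* Pmat n A (k + (i : ℕ)) (i : ℕ)) j

/-- The transformed dynamics matrix `Ā_k := Θ_{k+1} A_k Θ_k^{-1}`. -/
def Abar (n : ℕ) (A : ℤ → Matrix (Fin n) (Fin n) ℝ) (b : ℤ → Fin n → ℝ) (k : ℤ) :
    Matrix (Fin n) (Fin n) ℝ :=
  Theta n A b (k + 1) * A k * (Theta n A b k)⁻¹

section Aux

variable {n : ℕ} {A : ℤ → Matrix (Fin n) (Fin n) ℝ} {b : ℤ → Fin n → ℝ}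

lemma pmat_mul (A : ℤ → Matrix (Fin n) (Fin n) ℝ) (k : ℤ) (i j : ℕ) :
    Pmat n A (k + i) i * Pmat n A k j = Pmat n A (k + i) (i + j) := by
  induction j with
  | zero => simp [Pmat]
  | succ j ih =>
    show Pmat n A (k+i) i * (Pmat n A k j * A (k - ((j:ℤ) + 1))) = Pmat n A (k+i) (i+j+1)
    rw [← mul_assoc, ih]
    show _ = Pmat n A (k+i) (i+j) * A ((k+(i:ℤ)) - (((i+j : ℕ):ℤ) + 1))
    congr 2
    push_cast; ring

lemma cvec_orth (hM : ∀ k : ℤ, IsUnit (Mmat n A b k)) (k : ℤ) (j : ℕ) (hj : j < n) :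
    cvec n A b k ⬝ᵥ (Pmat n A k j *ᵥ b (k - 1 - (j : ℤ))) = if j = n - 1 then 1 else 0 := by
  have hd := (Matrix.isUnit_iff_isUnit_det _).mp (hM k)
  have h1 : (Mmat n A b k)⁻¹ * Mmat n A b k = 1 := Matrix.nonsing_inv_mul _ hd
  have key : cvec n A b k ⬝ᵥ (fun i => Mmat n A b k i ⟨j, hj⟩) = elast n ⟨j, hj⟩ := by
    have : cvec n A b k ⬝ᵥ (fun i => Mmat n A b k i ⟨j, hj⟩)
        = (cvec n A b k ᵥ* Mmat n A b k) ⟨j, hj⟩ := rfl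
    rw [this]
    unfold cvec
    rw [Matrix.vecMul_vecMul, h1, Matrix.vecMul_one]
  have hcol : (fun i => Mmat n A b k i ⟨j, hj⟩) = (Pmat n A k j *ᵥ b (k - 1 - (j : ℤ))) := rfl
  rw [hcol] at key
  rw [key]
  simp [elast]

lemma theta_row (k : ℤ) (i : Fin n) (v : Fin n → ℝ) :
    (Theta n A b k *ᵥ v) i = (cvec n A b (k + (i : ℕ)) ᵥ* Pmat n A (k + (i : ℕ)) (i : ℕ)) ⬝ᵥ v :=
  rfl

lemma theta_unit (hM : ∀ k : ℤ, IsUnit (Mmat n A b k)) (k : ℤ) :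
    IsUnit (Theta n A b k) := by
  set N := Theta n A b k * Mmat n A b k with hN
  have hNentry : ∀ (i j : Fin n), (i : ℕ) + (j : ℕ) < n →
      N i j = if (i : ℕ) + (j : ℕ) = n - 1 then 1 else 0 := by
    intro i j hij
    have h1 : N i j = (cvec n A b (k + (i:ℕ)) ᵥ* Pmat n A (k + (i:ℕ)) (i:ℕ)) ⬝ᵥ
        (fun l => Mmat n A b k l j) := rfl
    have hcol : (fun l => Mmat n A b k l j) = (Pmat n A k (j:ℕ) *ᵥ b (k - 1 - ((j:ℕ):ℤ))) := rfl
    rw [h1, hcol, ← Matrix.dotProduct_mulVec, Matrix.mulVec_mulVec, pmat_mul]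
    have harg : k - 1 - ((j:ℕ):ℤ) = (k + (i:ℕ)) - 1 - (((i:ℕ)+(j:ℕ) : ℕ) : ℤ) := by
      push_cast; ring
    rw [harg]
    exact cvec_orth hM _ _ hij
  -- J : exchange matrix
  set J : Matrix (Fin n) (Fin n) ℝ :=
    Matrix.of (fun i j => if (i : ℕ) + (j : ℕ) = n - 1 then (1:ℝ) else 0) with hJ
  have hL : ∀ i j : Fin n, (N * J) i j
      = ∑ m : Fin n, N i m * (if (m : ℕ) + (j : ℕ) = n - 1 then (1:ℝ) else 0) := by
    intro i j; rfl
  have hLtri : (N * J).BlockTriangular OrderDual.toDual := by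
    intro i j hij
    have hij' : (i : ℕ) < (j : ℕ) := hij
    rw [hL]
    apply Finset.sum_eq_zero
    intro m _
    rcases eq_or_ne ((m:ℕ) + (j:ℕ)) (n-1) with h | h
    · have hmi : (i:ℕ) + (m:ℕ) < n := by omega
      rw [hNentry i m hmi, if_neg (by omega), zero_mul]
    · rw [if_neg h, mul_zero]
  have hLdiag : ∀ i : Fin n, (N * J) i i = 1 := by
    intro i
    rw [hL]
    have hin : (i : ℕ) < n := i.isLt
    have hm : (⟨n - 1 - (i:ℕ), by omega⟩ : Fin n) ∈ Finset.univ := Finset.mem_univ _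
    rw [Finset.sum_eq_single (⟨n - 1 - (i:ℕ), by omega⟩ : Fin n)]
    · rw [hNentry _ _ (by simp; omega), if_pos (by simp; omega), if_pos (by simp; omega)]
      norm_num
    · intro m _ hne
      rw [if_neg, mul_zero]
      intro hcon
      exact hne (by apply Fin.ext; simp; omega)
    · intro hcon; exact absurd hm hcon
  have hdet : (N * J).det = 1 := by
    rw [Matrix.det_of_lowerTriangular _ hLtri]
    exact Finset.prod_eq_one (fun i _ => hLdiag i)
  have hNunit : IsUnit N.det := by
    have : N.det * J.det = 1 := by rw [← Matrix.det_mul, hdet]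
    exact IsUnit.of_mul_eq_one _ this
  have : IsUnit (Theta n A b k).det := by
    have h2 : N.det = (Theta n A b k).det * (Mmat n A b k).det := by
      rw [hN, Matrix.det_mul]
    rw [h2] at hNunit
    exact (IsUnit.mul_iff.mp hNunit).1
  exact (Matrix.isUnit_iff_isUnit_det _).mpr this

lemma sol_output (hM : ∀ k : ℤ, IsUnit (Mmat n A b k))
    (x : ℤ → Fin n → ℝ) (u : ℤ → ℝ)
    (hs : ∀ k : ℤ, x (k + 1) = A k *ᵥ x k + u k • b k) :
    ∀ j : ℕ, j < n → ∀ k : ℤ,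
      cvec n A b (k + j) ⬝ᵥ x (k + j)
        = (cvec n A b (k + j) ᵥ* Pmat n A (k + j) j) ⬝ᵥ x k := by
  intro j
  induction j with
  | zero => intro _ k; simp [Pmat, Matrix.vecMul_one]
  | succ j ih =>
    intro hj k
    have hj' : j < n := by omega
    have hkj : k + ((j:ℕ)+1 : ℕ) = (k + 1) + (j : ℕ) := by push_cast; ring
    rw [hkj, ih hj' (k+1), hs k]
    simp only [dotProduct_add, dotProduct_smul,
      Matrix.dotProduct_mulVec, Matrix.vecMul_vecMul]
    have hP : Pmat n A (k + 1 + (j:ℕ)) j * A k = Pmat n A (k + 1 + (j:ℕ)) (j+1) := by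
      show _ = Pmat n A (k + 1 + (j:ℕ)) j * A ((k + 1 + (j:ℕ)) - ((j:ℤ)+1))
      congr 1; ring
    have hb : b k = b ((k + 1 + (j:ℕ)) - 1 - ((j:ℕ):ℤ)) := by
      congr 1; ring
    have horth := cvec_orth hM (k + 1 + (j:ℕ)) j hj'
    rw [Matrix.dotProduct_mulVec] at horth
    rw [hP, hb, horth, if_neg (by omega)]
    rw [smul_eq_mul, mul_zero, add_zero]

lemma sol_u (hn : 1 ≤ n) (hM : ∀ k : ℤ, IsUnit (Mmat n A b k))
    (x : ℤ → Fin n → ℝ) (u : ℤ → ℝ)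
    (hs : ∀ k : ℤ, x (k + 1) = A k *ᵥ x k + u k • b k) (k : ℤ) :
    cvec n A b (k + n) ⬝ᵥ x (k + n)
      = (cvec n A b (k + n) ᵥ* Pmat n A (k + n) n) ⬝ᵥ x k + u k := by
  obtain ⟨m, rfl⟩ : ∃ m, n = m + 1 := ⟨n - 1, by omega⟩
  have h1 : (k:ℤ) + ((m + 1 : ℕ) : ℤ) = (k + 1) + (m : ℕ) := by push_cast; ring
  rw [show ((m+1 : ℕ) : ℤ) = ((m+1 : ℕ) : ℤ) from rfl]
  rw [h1, sol_output hM x u hs m (by omega) (k+1), hs k]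
  simp only [dotProduct_add, dotProduct_smul,
    Matrix.dotProduct_mulVec, Matrix.vecMul_vecMul]
  have hP : Pmat (m+1) A (k + 1 + (m:ℕ)) m * A k = Pmat (m+1) A (k + 1 + (m:ℕ)) (m+1) := by
    show _ = Pmat (m+1) A (k + 1 + (m:ℕ)) m * A ((k + 1 + (m:ℕ)) - ((m:ℤ)+1))
    congr 1; ring
  have hb : b k = b ((k + 1 + (m:ℕ)) - 1 - ((m:ℕ):ℤ)) := by congr 1; ring
  have horth := cvec_orth hM (k + 1 + (m:ℕ)) m (by omega)
  rw [Matrix.dotProduct_mulVec] at horth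
  rw [hP, hb, horth, if_pos (by omega), smul_eq_mul, mul_one]

lemma theta_x (hM : ∀ k : ℤ, IsUnit (Mmat n A b k))
    (x : ℤ → Fin n → ℝ) (u : ℤ → ℝ)
    (hs : ∀ k : ℤ, x (k + 1) = A k *ᵥ x k + u k • b k) (k : ℤ) :
    Theta n A b k *ᵥ x k = fun i : Fin n => cvec n A b (k + (i:ℕ)) ⬝ᵥ x (k + (i:ℕ)) := by
  funext i
  rw [theta_row, sol_output hM x u hs (i:ℕ) i.isLt k]

end Aux


/-- under the rank condition (`M_k` invertible for all `k`), the map sending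
a solution `(x, u)` of `x_{k+1} = A_k x_k + b_k u_k` to its output sequence
`(c_k^T x_k)_{k ∈ ℤ}` is a bijection from the set of all solutions onto the set of all
real sequences `ℤ → ℝ`: `y_k = c_k^T x_k` is a flat output. -/
theorem stmt10 (n : ℕ) (hn : 1 ≤ n)
    (A : ℤ → Matrix (Fin n) (Fin n) ℝ) (b : ℤ → Fin n → ℝ)
    (hM : ∀ k : ℤ, IsUnit (Mmat n A b k)) :
    Function.Bijective
      (fun s : {p : (ℤ → Fin n → ℝ) × (ℤ → ℝ) //
            ∀ k : ℤ, p.1 (k + 1) = A k *ᵥ p.1 k + p.2 k • b k} =>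
        fun k : ℤ => cvec n A b k ⬝ᵥ s.val.1 k) := by
  constructor
  · rintro ⟨⟨x, u⟩, hx⟩ ⟨⟨x', u'⟩, hx'⟩ h
    simp only at h hx hx'
    have hy : ∀ k, cvec n A b k ⬝ᵥ x k = cvec n A b k ⬝ᵥ x' k := fun k => congrFun h k
    have hxx : ∀ k, x k = x' k := by
      intro k
      have hTd := (Matrix.isUnit_iff_isUnit_det _).mp (theta_unit hM k)
      have h1 : Theta n A b k *ᵥ x k = Theta n A b k *ᵥ x' k := by
        rw [theta_x hM x u hx k, theta_x hM x' u' hx' k]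
        funext i; exact hy _
      have h2 := congrArg (fun v => (Theta n A b k)⁻¹ *ᵥ v) h1
      simpa [Matrix.mulVec_mulVec, Matrix.nonsing_inv_mul _ hTd] using h2
    have hxe : x = x' := funext hxx
    have huu : ∀ k, u k = u' k := by
      intro k
      have h1 := sol_u hn hM x u hx k
      have h2 := sol_u hn hM x' u' hx' k
      rw [hxe] at h1
      linarith
    exact Subtype.ext (Prod.ext hxe (funext huu))
  · intro y
    set xx : ℤ → Fin n → ℝ :=
      fun k => (Theta n A b k)⁻¹ *ᵥ (fun i : Fin n => y (k + (i:ℕ))) with hxxdef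
    set uu : ℤ → ℝ :=
      fun k => y (k + (n:ℕ)) - (cvec n A b (k + n) ᵥ* Pmat n A (k + n) n) ⬝ᵥ xx k with huudef
    have hTx : ∀ k, Theta n A b k *ᵥ xx k = fun i : Fin n => y (k + (i:ℕ)) := by
      intro k
      have hTd := (Matrix.isUnit_iff_isUnit_det _).mp (theta_unit hM k)
      rw [hxxdef]
      rw [Matrix.mulVec_mulVec, Matrix.mul_nonsing_inv _ hTd, Matrix.one_mulVec]
    have hrow : ∀ (k : ℤ) (i : Fin n),
        (cvec n A b (k + (i:ℕ)) ᵥ* Pmat n A (k + (i:ℕ)) (i:ℕ)) ⬝ᵥ xx k = y (k + (i:ℕ)) := by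
      intro k i
      rw [← theta_row, hTx k]
    have hsol : ∀ k, xx (k + 1) = A k *ᵥ xx k + uu k • b k := by
      intro k
      have hTd := (Matrix.isUnit_iff_isUnit_det _).mp (theta_unit hM (k+1))
      have key : Theta n A b (k+1) *ᵥ (A k *ᵥ xx k + uu k • b k)
          = fun i : Fin n => y ((k+1) + (i:ℕ)) := by
        funext i
        rw [Matrix.mulVec_add, Matrix.mulVec_smul]
        show (cvec n A b ((k+1) + (i:ℕ)) ᵥ* Pmat n A ((k+1) + (i:ℕ)) (i:ℕ)) ⬝ᵥ (A k *ᵥ xx k)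
            + uu k * ((cvec n A b ((k+1) + (i:ℕ)) ᵥ* Pmat n A ((k+1) + (i:ℕ)) (i:ℕ)) ⬝ᵥ b k)
            = y ((k+1) + (i:ℕ))
        rw [Matrix.dotProduct_mulVec, Matrix.vecMul_vecMul]
        have hP : Pmat n A ((k+1) + (i:ℕ)) (i:ℕ) * A k = Pmat n A ((k+1) + (i:ℕ)) ((i:ℕ)+1) := by
          show _ = Pmat n A ((k+1) + (i:ℕ)) (i:ℕ) * A (((k+1) + ((i:ℕ):ℤ)) - (((i:ℕ):ℤ)+1))
          congr 1; ring
        have hb : b k = b (((k+1) + ((i:ℕ):ℤ)) - 1 - ((i:ℕ):ℤ)) := by congr 1; ring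
        have horth := cvec_orth hM ((k+1) + (i:ℕ)) (i:ℕ) i.isLt
        rw [Matrix.dotProduct_mulVec] at horth
        rw [hP, hb, horth]
        rcases eq_or_ne ((i:ℕ)) (n-1) with hi | hi
        · have hin : (k+1) + ((i:ℕ):ℤ) = k + (n:ℕ) := by omega
          have hiN : (i:ℕ) + 1 = n := by omega
          rw [if_pos hi, mul_one, hin, hiN, huudef]
          ring
        · rw [if_neg hi, mul_zero, add_zero]
          have hlt : (i:ℕ) + 1 < n := by omega
          have := hrow k ⟨(i:ℕ)+1, hlt⟩
          simp only [Fin.val_mk] at this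
          have harg : k + (((i:ℕ)+1 : ℕ) : ℤ) = (k+1) + ((i:ℕ):ℤ) := by push_cast; ring
          rw [harg] at this
          exact this
      have h2 := congrArg (fun v => (Theta n A b (k+1))⁻¹ *ᵥ v) key
      simp only [Matrix.mulVec_mulVec, Matrix.nonsing_inv_mul _ hTd, Matrix.one_mulVec] at h2
      calc xx (k+1) = (Theta n A b (k+1))⁻¹ *ᵥ (fun i : Fin n => y ((k+1) + (i:ℕ))) := rfl
        _ = A k *ᵥ xx k + uu k • b k := h2.symm
    refine ⟨⟨⟨xx, uu⟩, hsol⟩, ?_⟩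
    funext k
    show cvec n A b k ⬝ᵥ xx k = y k
    have h0 := hrow k ⟨0, by omega⟩
    simp only [Fin.val_mk, Nat.cast_zero, add_zero] at h0
    rw [← h0]
    show cvec n A b k ⬝ᵥ xx k = (cvec n A b k ᵥ* Pmat n A k 0) ⬝ᵥ xx k
    rw [show Pmat n A k 0 = 1 from rfl, Matrix.vecMul_one]
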